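/- Let a, b, c, d, e, y, z, w, u, x, p, q be nonzero complex numbers with all denominators nonzero, and set a_0 = a(1-bc/a)(1-cd/a)(1-ce/a)(1-bcde/a) / [c(1-bcd/a)(1-bce/a)(1-cde/a)(1-a/c)] and a_1 = x(1-yz/x)(1-zw/x)(1-zu/x)(1-yzwu/x) / [z(1-y)(1-w)(1-u)(1-yz^2wu/x^2)]. Then for every integer n ≥ 0: a_0 Σ_{k=0}^{n-1} [(1-bcde p^{2k}/a)/(1-bcde/a)] p^k · (b,d,e,bc^2de/a^2;p)_k / (ap/c, bcep/a, bcdp/a, cdep/a;p)_k · (yq,wq,uq,yz^2wuq/x^2;q)_k / (xq/z, zwuq/x, yzuq/x, yzwq/x;q)_k = (b,d,e,bc^2de/a^2;p)_n / (a/c, bce/a, bcd/a, cde/a;p)_n · (yq,wq,uq,yz^2wuq/x^2;q)_n / (xq/z, zwuq/x, yzuq/x, yzwq/x;q)_n - 1 - a_1 Σ_{k=1}^{n} [(1-yzwu q^{2k}/x)/(1-yzwu/x)] q^k · (y,w,u,yz^2wu/x^2;q)_k / (xq/z, zwuq/x, yzuq/x, yzwq/x;q)_k · (b,d,e,bc^2de/a^2;p)_k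 / (a/c, bce/a, bcd/a, cde/a;p)_k. -/

import Mathlib

open Finset

/-- The q-shifted factorial `(a;q)_k`. -/
noncomputable def qPoch (a q : ℂ) (k : ℕ) : ℂ := ∏ j ∈ Finset.range k, (1 - a * q ^ j)

lemma qPoch_succ (α q : ℂ) (k : ℕ) : qPoch α q (k+1) = qPoch α q k * (1 - α * q ^ k) :=
  Finset.prod_range_succ _ _

lemma qPoch_succ' (α β q : ℂ) (h : β = α * q) (k : ℕ) :
    qPoch α q (k+1) = (1 - α) * qPoch β q k := by
  subst h
  rw [qPoch, Finset.prod_range_succ', pow_zero, mul_one, mul_comm]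
  congr 1
  exact Finset.prod_congr rfl fun j _ => by ring

lemma div_helper' (N D cA cB P C R : ℂ) (hD : D ≠ 0) (hB : cB ≠ 0)
    (h : N * (cA * P) * C = R * (cB * D)) : N / D * (cA / cB * P) * C = R := by
  field_simp
  linear_combination h

lemma key_step (NA DA DA'' NB DB nP dP nQ dQ C0 C1 a0 a1 cP cQ : ℂ)
    (hDA : DA ≠ 0) (hDB : DB ≠ 0) (hdP : dP ≠ 0) (hdQ : dQ ≠ 0)
    (hC0 : C0 ≠ 0) (hDA'' : DA'' ≠ 0)
    (h1 : DA * dP = C0 * DA'')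
    (h7 : a0 * cP * C0 = nP - dP)
    (h8 : a1 * cQ * C1 = nQ - dQ) :
    a0 * (cP * (NA / DA'') * (NB / DB)) +
      a1 * (cQ * (C1 * NB / (DB * dQ)) * (NA * nP / (DA * dP))) =
    NA * nP / (DA * dP) * (NB * nQ / (DB * dQ)) - NA / DA * (NB / DB) := by
  have hnP : nP = a0 * cP * C0 + dP := by linear_combination -h7
  have hnQ : nQ = a1 * cQ * C1 + dQ := by linear_combination -h8
  have hD : DA'' = DA * dP / C0 := by
    field_simp
    linear_combination -h1
  subst hnP hnQ hD
  field_simp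
  ring

set_option maxHeartbeats 2000000 in
/-- Bibasic transformation with two independent bases `p` and `q` (Corollary of the
first Abel-type transformation). -/
theorem bibasic_transformation
    (a b c d e x y z w u p q a0 a1 : ℂ) (n : ℕ)
    (ha : a ≠ 0) (hb : b ≠ 0) (hc : c ≠ 0) (hd : d ≠ 0) (he : e ≠ 0)
    (hx : x ≠ 0) (hy : y ≠ 0) (hz : z ≠ 0) (hw : w ≠ 0) (hu : u ≠ 0)
    (hp : p ≠ 0) (hq : q ≠ 0)
    (hbcde : 1 - b * c * d * e / a ≠ 0)
    (hyzwu : 1 - y * z * w * u / x ≠ 0)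
    (ha0den : c * ((1 - b * c * d / a) * (1 - b * c * e / a) * (1 - c * d * e / a) * (1 - a / c)) ≠ 0)
    (ha1den : z * ((1 - y) * (1 - w) * (1 - u) * (1 - y * z ^ 2 * w * u / x ^ 2)) ≠ 0)
    (ha0 : a0 = a * ((1 - b * c / a) * (1 - c * d / a) * (1 - c * e / a) * (1 - b * c * d * e / a)) /
      (c * ((1 - b * c * d / a) * (1 - b * c * e / a) * (1 - c * d * e / a) * (1 - a / c))))
    (ha1 : a1 = x * ((1 - y * z / x) * (1 - z * w / x) * (1 - z * u / x) * (1 - y * z * w * u / x)) /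
      (z * ((1 - y) * (1 - w) * (1 - u) * (1 - y * z ^ 2 * w * u / x ^ 2))))
    (hdenP : ∀ k ≤ n, qPoch (a * p / c) p k * qPoch (b * c * e * p / a) p k *
      qPoch (b * c * d * p / a) p k * qPoch (c * d * e * p / a) p k ≠ 0)
    (hdenP' : ∀ k ≤ n, qPoch (a / c) p k * qPoch (b * c * e / a) p k *
      qPoch (b * c * d / a) p k * qPoch (c * d * e / a) p k ≠ 0)
    (hdenQ : ∀ k ≤ n, qPoch (x * q / z) q k * qPoch (z * w * u * q / x) q k *
      qPoch (y * z * u * q / x) q k * qPoch (y * z * w * q / x) q k ≠ 0) :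
    a0 * ∑ k ∈ Finset.range n,
        (1 - b * c * d * e * p ^ (2 * k) / a) / (1 - b * c * d * e / a) * p ^ k *
          ((qPoch b p k * qPoch d p k * qPoch e p k * qPoch (b * c ^ 2 * d * e / a ^ 2) p k) /
            (qPoch (a * p / c) p k * qPoch (b * c * e * p / a) p k *
              qPoch (b * c * d * p / a) p k * qPoch (c * d * e * p / a) p k)) *
          ((qPoch (y * q) q k * qPoch (w * q) q k * qPoch (u * q) q k *
              qPoch (y * z ^ 2 * w * u * q / x ^ 2) q k) /
            (qPoch (x * q / z) q k * qPoch (z * w * u * q / x) q k *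
              qPoch (y * z * u * q / x) q k * qPoch (y * z * w * q / x) q k)) =
      (qPoch b p n * qPoch d p n * qPoch e p n * qPoch (b * c ^ 2 * d * e / a ^ 2) p n) /
          (qPoch (a / c) p n * qPoch (b * c * e / a) p n * qPoch (b * c * d / a) p n *
            qPoch (c * d * e / a) p n) *
        ((qPoch (y * q) q n * qPoch (w * q) q n * qPoch (u * q) q n *
            qPoch (y * z ^ 2 * w * u * q / x ^ 2) q n) /
          (qPoch (x * q / z) q n * qPoch (z * w * u * q / x) q n *
            qPoch (y * z * u * q / x) q n * qPoch (y * z * w * q / x) q n)) - 1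
      - a1 * ∑ k ∈ Finset.Icc 1 n,
          (1 - y * z * w * u * q ^ (2 * k) / x) / (1 - y * z * w * u / x) * q ^ k *
            ((qPoch y q k * qPoch w q k * qPoch u q k *
                qPoch (y * z ^ 2 * w * u / x ^ 2) q k) /
              (qPoch (x * q / z) q k * qPoch (z * w * u * q / x) q k *
                qPoch (y * z * u * q / x) q k * qPoch (y * z * w * q / x) q k)) *
            ((qPoch b p k * qPoch d p k * qPoch e p k * qPoch (b * c ^ 2 * d * e / a ^ 2) p k) /
              (qPoch (a / c) p k * qPoch (b * c * e / a) p k * qPoch (b * c * d / a) p k *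
                qPoch (c * d * e / a) p k)) := by
  -- components of the nonvanishing hypotheses
  have ha0den' := ha0den
  have ha1den' := ha1den
  simp only [mul_ne_zero_iff] at ha0den' ha1den'
  obtain ⟨hc', ⟨⟨hbcd, hbce⟩, hcde⟩, hac⟩ := ha0den'
  obtain ⟨hz', ⟨⟨hy1, hw1⟩, hu1⟩, hxz⟩ := ha1den'
  revert hdenP hdenP' hdenQ
  induction n with
  | zero =>
      intro _ _ _
      simp [qPoch]
  | succ m ih =>
      intro hdenP hdenP' hdenQ
      have hm : m ≤ m + 1 := Nat.le_succ m
      have hDAm : qPoch (a / c) p m * qPoch (b * c * e / a) p m *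
          qPoch (b * c * d / a) p m * qPoch (c * d * e / a) p m ≠ 0 := hdenP' m hm
      have hDAm1 := hdenP' (m+1) le_rfl
      have hDA'' := hdenP m hm
      have hDBm := hdenQ m hm
      have hDBm1 := hdenQ (m+1) le_rfl
      -- product decompositions at m+1
      have hNA1 : qPoch b p (m+1) * qPoch d p (m+1) * qPoch e p (m+1) *
          qPoch (b * c ^ 2 * d * e / a ^ 2) p (m+1) =
          (qPoch b p m * qPoch d p m * qPoch e p m * qPoch (b * c ^ 2 * d * e / a ^ 2) p m) *
          ((1 - b * p ^ m) * (1 - d * p ^ m) * (1 - e * p ^ m) *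
            (1 - b * c ^ 2 * d * e / a ^ 2 * p ^ m)) := by
        simp only [qPoch_succ]; ring
      have hDA1 : qPoch (a / c) p (m+1) * qPoch (b * c * e / a) p (m+1) *
          qPoch (b * c * d / a) p (m+1) * qPoch (c * d * e / a) p (m+1) =
          (qPoch (a / c) p m * qPoch (b * c * e / a) p m *
            qPoch (b * c * d / a) p m * qPoch (c * d * e / a) p m) *
          ((1 - a / c * p ^ m) * (1 - b * c * e / a * p ^ m) *
            (1 - b * c * d / a * p ^ m) * (1 - c * d * e / a * p ^ m)) := by
        simp only [qPoch_succ]; ring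
      have hC0 : qPoch (a / c) p (m+1) * qPoch (b * c * e / a) p (m+1) *
          qPoch (b * c * d / a) p (m+1) * qPoch (c * d * e / a) p (m+1) =
          ((1 - a / c) * (1 - b * c * e / a) * (1 - b * c * d / a) * (1 - c * d * e / a)) *
          (qPoch (a * p / c) p m * qPoch (b * c * e * p / a) p m *
            qPoch (b * c * d * p / a) p m * qPoch (c * d * e * p / a) p m) := by
        rw [qPoch_succ' (a / c) (a * p / c) p (by ring),
          qPoch_succ' (b * c * e / a) (b * c * e * p / a) p (by ring),
          qPoch_succ' (b * c * d / a) (b * c * d * p / a) p (by ring),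
          qPoch_succ' (c * d * e / a) (c * d * e * p / a) p (by ring)]
        ring
      have hNB1 : qPoch (y * q) q (m+1) * qPoch (w * q) q (m+1) * qPoch (u * q) q (m+1) *
          qPoch (y * z ^ 2 * w * u * q / x ^ 2) q (m+1) =
          (qPoch (y * q) q m * qPoch (w * q) q m * qPoch (u * q) q m *
            qPoch (y * z ^ 2 * w * u * q / x ^ 2) q m) *
          ((1 - y * q * q ^ m) * (1 - w * q * q ^ m) * (1 - u * q * q ^ m) *
            (1 - y * z ^ 2 * w * u * q / x ^ 2 * q ^ m)) := by
        simp only [qPoch_succ]; ring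
      have hDB1 : qPoch (x * q / z) q (m+1) * qPoch (z * w * u * q / x) q (m+1) *
          qPoch (y * z * u * q / x) q (m+1) * qPoch (y * z * w * q / x) q (m+1) =
          (qPoch (x * q / z) q m * qPoch (z * w * u * q / x) q m *
            qPoch (y * z * u * q / x) q m * qPoch (y * z * w * q / x) q m) *
          ((1 - x * q / z * q ^ m) * (1 - z * w * u * q / x * q ^ m) *
            (1 - y * z * u * q / x * q ^ m) * (1 - y * z * w * q / x * q ^ m)) := by
        simp only [qPoch_succ]; ring
      have hNB2 : qPoch y q (m+1) * qPoch w q (m+1) * qPoch u q (m+1) *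
          qPoch (y * z ^ 2 * w * u / x ^ 2) q (m+1) =
          ((1 - y) * (1 - w) * (1 - u) * (1 - y * z ^ 2 * w * u / x ^ 2)) *
          (qPoch (y * q) q m * qPoch (w * q) q m * qPoch (u * q) q m *
            qPoch (y * z ^ 2 * w * u * q / x ^ 2) q m) := by
        rw [qPoch_succ' y (y * q) q (by ring),
          qPoch_succ' w (w * q) q (by ring),
          qPoch_succ' u (u * q) q (by ring),
          qPoch_succ' (y * z ^ 2 * w * u / x ^ 2) (y * z ^ 2 * w * u * q / x ^ 2) q (by ring)]
        ring
      -- nonvanishing of the new factors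
      rw [hDA1] at hDAm1
      rw [hDB1] at hDBm1
      have hdP := (mul_ne_zero_iff.mp hDAm1).2
      have hdQ := (mul_ne_zero_iff.mp hDBm1).2
      have hDBm' := (mul_ne_zero_iff.mp hDBm1).1
      have hC0ne : (1 - a / c) * (1 - b * c * e / a) * (1 - b * c * d / a) *
          (1 - c * d * e / a) ≠ 0 := by
        exact mul_ne_zero (mul_ne_zero (mul_ne_zero hac hbce) hbcd) hcde
      have hC1ne : (1 - y) * (1 - w) * (1 - u) * (1 - y * z ^ 2 * w * u / x ^ 2) ≠ 0 := by
        exact mul_ne_zero (mul_ne_zero (mul_ne_zero hy1 hw1) hu1) hxz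
      -- the two scalar (polynomial) identities
      have h7 : a0 * ((1 - b * c * d * e * p ^ (2 * m) / a) / (1 - b * c * d * e / a) * p ^ m) *
          ((1 - a / c) * (1 - b * c * e / a) * (1 - b * c * d / a) * (1 - c * d * e / a)) =
          ((1 - b * p ^ m) * (1 - d * p ^ m) * (1 - e * p ^ m) *
            (1 - b * c ^ 2 * d * e / a ^ 2 * p ^ m)) -
          ((1 - a / c * p ^ m) * (1 - b * c * e / a * p ^ m) *
            (1 - b * c * d / a * p ^ m) * (1 - c * d * e / a * p ^ m)) := by
        rw [ha0]
        refine div_helper' _ _ _ _ _ _ _ ha0den hbcde ?_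
        field_simp
        ring
      have h8 : a1 * ((1 - y * z * w * u * q ^ (2 * (m+1)) / x) / (1 - y * z * w * u / x) *
            q ^ (m+1)) *
          ((1 - y) * (1 - w) * (1 - u) * (1 - y * z ^ 2 * w * u / x ^ 2)) =
          ((1 - y * q * q ^ m) * (1 - w * q * q ^ m) * (1 - u * q * q ^ m) *
            (1 - y * z ^ 2 * w * u * q / x ^ 2 * q ^ m)) -
          ((1 - x * q / z * q ^ m) * (1 - z * w * u * q / x * q ^ m) *
            (1 - y * z * u * q / x * q ^ m) * (1 - y * z * w * q / x * q ^ m)) := by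
        rw [ha1]
        refine div_helper' _ _ _ _ _ _ _ ha1den hyzwu ?_
        field_simp
        ring
      have h1 : (qPoch (a / c) p m * qPoch (b * c * e / a) p m *
            qPoch (b * c * d / a) p m * qPoch (c * d * e / a) p m) *
          ((1 - a / c * p ^ m) * (1 - b * c * e / a * p ^ m) *
            (1 - b * c * d / a * p ^ m) * (1 - c * d * e / a * p ^ m)) =
          ((1 - a / c) * (1 - b * c * e / a) * (1 - b * c * d / a) * (1 - c * d * e / a)) *
          (qPoch (a * p / c) p m * qPoch (b * c * e * p / a) p m *
            qPoch (b * c * d * p / a) p m * qPoch (c * d * e * p / a) p m) :=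
        hDA1.symm.trans hC0
      have hmain := key_step
        (qPoch b p m * qPoch d p m * qPoch e p m * qPoch (b * c ^ 2 * d * e / a ^ 2) p m)
        (qPoch (a / c) p m * qPoch (b * c * e / a) p m *
          qPoch (b * c * d / a) p m * qPoch (c * d * e / a) p m)
        (qPoch (a * p / c) p m * qPoch (b * c * e * p / a) p m *
          qPoch (b * c * d * p / a) p m * qPoch (c * d * e * p / a) p m)
        (qPoch (y * q) q m * qPoch (w * q) q m * qPoch (u * q) q m *
          qPoch (y * z ^ 2 * w * u * q / x ^ 2) q m)
        (qPoch (x * q / z) q m * qPoch (z * w * u * q / x) q m *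
          qPoch (y * z * u * q / x) q m * qPoch (y * z * w * q / x) q m)
        ((1 - b * p ^ m) * (1 - d * p ^ m) * (1 - e * p ^ m) *
          (1 - b * c ^ 2 * d * e / a ^ 2 * p ^ m))
        ((1 - a / c * p ^ m) * (1 - b * c * e / a * p ^ m) *
          (1 - b * c * d / a * p ^ m) * (1 - c * d * e / a * p ^ m))
        ((1 - y * q * q ^ m) * (1 - w * q * q ^ m) * (1 - u * q * q ^ m) *
          (1 - y * z ^ 2 * w * u * q / x ^ 2 * q ^ m))
        ((1 - x * q / z * q ^ m) * (1 - z * w * u * q / x * q ^ m) *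
          (1 - y * z * u * q / x * q ^ m) * (1 - y * z * w * q / x * q ^ m))
        ((1 - a / c) * (1 - b * c * e / a) * (1 - b * c * d / a) * (1 - c * d * e / a))
        ((1 - y) * (1 - w) * (1 - u) * (1 - y * z ^ 2 * w * u / x ^ 2))
        a0 a1
        ((1 - b * c * d * e * p ^ (2 * m) / a) / (1 - b * c * d * e / a) * p ^ m)
        ((1 - y * z * w * u * q ^ (2 * (m+1)) / x) / (1 - y * z * w * u / x) * q ^ (m+1))
        hDAm hDBm hdP hdQ hC0ne hDA'' h1 h7 h8
      have ih' := ih (fun k hk => hdenP k (hk.trans hm))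
        (fun k hk => hdenP' k (hk.trans hm)) (fun k hk => hdenQ k (hk.trans hm))
      rw [Finset.sum_range_succ, Finset.sum_Icc_succ_top (Nat.le_add_left 1 m),
        hNA1, hDA1, hNB1, hDB1, hNB2]
      linear_combination ih' + hmain
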